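/- For every natural number n, the n-th Catalan number satisfies (Nat.catalan n : ℝ) ≥ 4^n / ((n+1) · √(π · (n + 1/3))), where √ is the real square root and π is the real number pi. -/

import Mathlib

open Real Filter Topology Stirling

private noncomputable def cbSeq (n : ℕ) : ℝ :=
  (Nat.centralBinom n : ℝ) * Real.sqrt (n + 1/3) / 4 ^ n

private lemma cbSeq_antitone : Antitone cbSeq := by
  apply antitone_nat_of_succ_le
  intro n
  have hcb : ((n : ℝ) + 1) * (Nat.centralBinom (n+1) : ℝ)
      = 2 * (2 * n + 1) * (Nat.centralBinom n : ℝ) := by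
    exact_mod_cast congrArg (Nat.cast : ℕ → ℝ) (Nat.succ_mul_centralBinom_succ n)
  have hcb0 : (0:ℝ) < (Nat.centralBinom n : ℝ) := by
    exact_mod_cast Nat.centralBinom_pos n
  have hn0 : (0:ℝ) ≤ (n:ℝ) := Nat.cast_nonneg n
  -- key inequality: (2n+1) * √(n+4/3) ≤ 2(n+1) * √(n+1/3)
  have key : (2 * (n:ℝ) + 1) * Real.sqrt ((n:ℝ) + 1 + 1/3)
      ≤ 2 * ((n:ℝ) + 1) * Real.sqrt ((n:ℝ) + 1/3) := by
    have h1 : (2 * (n:ℝ) + 1) * Real.sqrt ((n:ℝ) + 1 + 1/3)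
        = Real.sqrt ((2 * (n:ℝ) + 1)^2 * ((n:ℝ) + 1 + 1/3)) := by
      rw [Real.sqrt_mul (by positivity), Real.sqrt_sq (by positivity)]
    have h2 : 2 * ((n:ℝ) + 1) * Real.sqrt ((n:ℝ) + 1/3)
        = Real.sqrt ((2 * ((n:ℝ) + 1))^2 * ((n:ℝ) + 1/3)) := by
      rw [Real.sqrt_mul (by positivity), Real.sqrt_sq (by positivity)]
    rw [h1, h2]
    apply Real.sqrt_le_sqrt
    nlinarith [hn0]
  have step : ((n:ℝ) + 1) * ((Nat.centralBinom (n+1) : ℝ) * Real.sqrt ((n:ℝ) + 1 + 1/3))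
      ≤ ((n:ℝ) + 1) * (4 * (Nat.centralBinom n : ℝ) * Real.sqrt ((n:ℝ) + 1/3)) := by
    calc ((n:ℝ) + 1) * ((Nat.centralBinom (n+1) : ℝ) * Real.sqrt ((n:ℝ) + 1 + 1/3))
        = (Nat.centralBinom n : ℝ) * ((2 * (n:ℝ) + 1) * Real.sqrt ((n:ℝ) + 1 + 1/3)) * 2 := by
          rw [show ((n:ℝ) + 1) * ((Nat.centralBinom (n+1) : ℝ) * Real.sqrt ((n:ℝ) + 1 + 1/3))
            = (((n:ℝ) + 1) * (Nat.centralBinom (n+1) : ℝ)) * Real.sqrt ((n:ℝ) + 1 + 1/3) by ring,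
            hcb]; ring
      _ ≤ (Nat.centralBinom n : ℝ) * (2 * ((n:ℝ) + 1) * Real.sqrt ((n:ℝ) + 1/3)) * 2 := by
          have := mul_le_mul_of_nonneg_left key hcb0.le
          nlinarith [this]
      _ = ((n:ℝ) + 1) * (4 * (Nat.centralBinom n : ℝ) * Real.sqrt ((n:ℝ) + 1/3)) := by ring
  have step2 : (Nat.centralBinom (n+1) : ℝ) * Real.sqrt ((n:ℝ) + 1 + 1/3)
      ≤ 4 * (Nat.centralBinom n : ℝ) * Real.sqrt ((n:ℝ) + 1/3) :=
    le_of_mul_le_mul_left step (by positivity)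
  unfold cbSeq
  rw [div_le_div_iff₀ (by positivity) (by positivity)]
  push_cast
  calc (Nat.centralBinom (n+1) : ℝ) * Real.sqrt ((n:ℝ) + 1 + 1/3) * 4 ^ n
      ≤ 4 * (Nat.centralBinom n : ℝ) * Real.sqrt ((n:ℝ) + 1/3) * 4 ^ n := by
        exact mul_le_mul_of_nonneg_right step2 (by positivity)
    _ = (Nat.centralBinom n : ℝ) * Real.sqrt ((n:ℝ) + 1/3) * 4 ^ (n+1) := by ring

private lemma stirling_ratio (n : ℕ) (hn : n ≠ 0) :
    stirlingSeq (2*n) / stirlingSeq n ^ 2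
      = (Nat.centralBinom n : ℝ) * Real.sqrt n / 4 ^ n := by
  have hn0 : (0:ℝ) < n := by exact_mod_cast Nat.pos_of_ne_zero hn
  have hsub : 2 * n - n = n := by omega
  have hfac : (0:ℝ) < (Nat.factorial n : ℝ) := by exact_mod_cast Nat.factorial_pos n
  have hfac2 : (0:ℝ) < (Nat.factorial (2*n) : ℝ) := by exact_mod_cast Nat.factorial_pos (2*n)
  have hsq2n : Real.sqrt (2 * (n:ℝ)) ^ 2 = 2 * n := Real.sq_sqrt (by positivity)
  have hsq4n : Real.sqrt (2 * ((2:ℝ) * n)) = 2 * Real.sqrt n := by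
    rw [show 2 * ((2:ℝ)*n) = 4 * n by ring, Real.sqrt_mul (by norm_num),
      show Real.sqrt 4 = 2 by
        rw [show (4:ℝ) = 2^2 by norm_num, Real.sqrt_sq (by norm_num)]]
  have hpow : ((2:ℝ) * n / Real.exp 1) ^ (2*n) = 4 ^ n * (((n:ℝ) / Real.exp 1) ^ n)^2 := by
    have e1 : (2:ℝ)^(2*n) = 4^n := by rw [pow_mul]; norm_num
    have e2 : ((n:ℝ)/Real.exp 1)^(2*n) = (((n:ℝ)/Real.exp 1)^n)^2 := by
      rw [← pow_mul, mul_comm]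
    rw [mul_div_assoc, mul_pow, e1, e2]
  rw [stirlingSeq, stirlingSeq, Nat.centralBinom, Nat.cast_choose ℝ (by omega : n ≤ 2*n), hsub]
  push_cast
  rw [hsq4n, hpow]
  set P := ((n:ℝ):ℝ)^n / Real.exp 1 ^ n with hP
  have hP0 : (0:ℝ) < P := by rw [hP]; positivity
  set t := Real.sqrt (2*(n:ℝ)) with htdef
  have ht0 : (0:ℝ) < t := Real.sqrt_pos.mpr (by positivity)
  have ht : t^2 = 2*(n:ℝ) := hsq2n
  set s := Real.sqrt (n:ℝ) with hsdef
  have hs0 : (0:ℝ) < s := Real.sqrt_pos.mpr hn0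
  have hss : s * s = (n:ℝ) := Real.mul_self_sqrt hn0.le
  rw [div_pow ((Nat.factorial n : ℝ)), mul_pow, ht, ← hss]
  have hne1 : ((n:ℝ)^n) ≠ 0 := by positivity
  have hne2 : (Real.exp 1)^n ≠ 0 := by positivity
  have hne3 : ((4:ℝ)^n) ≠ 0 := by positivity
  field_simp

private lemma cbSeq_eq (n : ℕ) (hn : n ≠ 0) :
    cbSeq n = stirlingSeq (2*n) / stirlingSeq n ^ 2 * Real.sqrt (((n:ℝ) + 1/3) / n) := by
  have hn0 : (0:ℝ) < n := by exact_mod_cast Nat.pos_of_ne_zero hn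
  have hs0 : (0:ℝ) < Real.sqrt (n:ℝ) := Real.sqrt_pos.mpr hn0
  rw [stirling_ratio n hn, Real.sqrt_div (by positivity)]
  unfold cbSeq
  field_simp

private lemma cbSeq_tendsto : Tendsto cbSeq atTop (𝓝 (1 / Real.sqrt π)) := by
  have h2n : Tendsto (fun n : ℕ => 2 * n) atTop atTop :=
    tendsto_atTop_atTop_of_monotone (fun a b h => by omega) (fun b => ⟨b, by omega⟩)
  have h1 : Tendsto (fun n : ℕ => stirlingSeq (2*n)) atTop (𝓝 (Real.sqrt π)) :=
    tendsto_stirlingSeq_sqrt_pi.comp h2n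
  have h2 : Tendsto (fun n : ℕ => stirlingSeq n ^ 2) atTop (𝓝 (Real.sqrt π ^ 2)) :=
    tendsto_stirlingSeq_sqrt_pi.pow 2
  have h3 : Tendsto (fun n : ℕ => (((n:ℝ) + 1/3) / n)) atTop (𝓝 1) := by
    have := (tendsto_const_div_atTop_nhds_zero_nat (1/3)).const_add (1:ℝ)
    rw [add_zero] at this
    refine this.congr' ?_
    filter_upwards [eventually_ge_atTop 1] with n hn
    have hn0 : (0:ℝ) < n := by exact_mod_cast hn
    field_simp
  have h3' : Tendsto (fun n : ℕ => Real.sqrt (((n:ℝ) + 1/3) / n)) atTop (𝓝 1) := by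
    have := (Real.continuous_sqrt.tendsto 1).comp h3
    rw [Real.sqrt_one] at this
    exact this
  have hπ : (0:ℝ) < Real.sqrt π := Real.sqrt_pos.mpr Real.pi_pos
  have hmain := (h1.div h2 (by positivity)).mul h3'
  have hval : Real.sqrt π / Real.sqrt π ^ 2 * 1 = 1 / Real.sqrt π := by
    rw [mul_one, sq]
    field_simp
  rw [hval] at hmain
  refine hmain.congr' ?_
  filter_upwards [eventually_ge_atTop 1] with n hn
  exact (cbSeq_eq n (by omega)).symm

private lemma cbSeq_ge (n : ℕ) : 1 / Real.sqrt π ≤ cbSeq n :=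
  cbSeq_antitone.le_of_tendsto cbSeq_tendsto n

/-- Lower bound for the Catalan numbers:
`catalan n ≥ 4^n / ((n+1) * √(π * (n + 1/3)))`. -/
theorem catalan_lower_bound (n : ℕ) :
    (catalan n : ℝ) ≥ 4 ^ n / ((n + 1) * Real.sqrt (Real.pi * (n + 1 / 3))) := by
  have hcat : ((n:ℝ) + 1) * (catalan n : ℝ) = (Nat.centralBinom n : ℝ) := by
    exact_mod_cast congrArg (Nat.cast : ℕ → ℝ) (succ_mul_catalan_eq_centralBinom n)
  have hπ : (0:ℝ) < Real.sqrt π := Real.sqrt_pos.mpr Real.pi_pos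
  have hs : (0:ℝ) < Real.sqrt ((n:ℝ) + 1/3) := Real.sqrt_pos.mpr (by positivity)
  have hsplit : Real.sqrt (Real.pi * ((n:ℝ) + 1/3))
      = Real.sqrt π * Real.sqrt ((n:ℝ) + 1/3) := Real.sqrt_mul Real.pi_pos.le _
  have h := cbSeq_ge n
  unfold cbSeq at h
  rw [div_le_div_iff₀ (by positivity) (by positivity)] at h
  rw [ge_iff_le, hsplit, div_le_iff₀ (by positivity)]
  calc (4:ℝ)^n = 1 * 4^n := by ring
    _ ≤ (Nat.centralBinom n : ℝ) * Real.sqrt ((n:ℝ) + 1/3) * Real.sqrt π := h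
    _ = (catalan n : ℝ) * (((n:ℝ) + 1) * (Real.sqrt π * Real.sqrt ((n:ℝ) + 1/3))) := by
        rw [← hcat]; ring
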